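/- Let ε ∈ (0,1] and λ ≥ 3. There is a constant C > 0 depending only on λ (independent of ε) with the following property. Let u ∈ C⁴([0,1]) satisfy u(0)=u'(0)=u(1)=u'(1)=0 and set v := ε^{3/2}u''. Let V_h be a real linear subspace of pairs (w,z) with w ∈ C²([0,1]) satisfying w(0)=w'(0)=w(1)=w'(1)=0 and z ∈ C²([0,1]), and let (u_h,v_h) ∈ V_h satisfy the Galerkin orthogonality B((u−u_h, v−v_h),(w,z)) = 0 for all (w,z) ∈ V_h. Then ⦀(u−u_h, v−v_h)⦀ ≤ C · inf over (u*,v*) ∈ V_h of ⦀(u−u*, v−v*)⦀, and moreover ⦀(u−u_h, v−v_h)⦀ ≤ C[ inf over u* with (u*,0) ∈ V_h of (‖u−u*‖ + ε^{3/2}‖(u−u*)''‖) + C ε^{3/2} inf over v* with (0,v*) ∈ V_h of (‖u''−v*‖ + ε²‖u⁽⁴⁾ − v*''‖) ] whenever V_h = V_h^u × V_h^v is a product of subspaces. -/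

import Mathlib

open MeasureTheory Set Real

noncomputable section

/-- L²(0,1) inner product. -/
def L2ip (f g : ℝ → ℝ) : ℝ := ∫ x in (0:ℝ)..1, f x * g x

/-- Square of the L²(0,1) norm. -/
def L2nsq (f : ℝ → ℝ) : ℝ := ∫ x in (0:ℝ)..1, (f x)^2

/-- L²(0,1) norm. -/
def L2nrm (f : ℝ → ℝ) : ℝ := Real.sqrt (L2nsq f)

/-- k-th derivative within [0,1]. -/
def Dn (k : ℕ) (f : ℝ → ℝ) : ℝ → ℝ := iteratedDerivWithin k f (Icc (0:ℝ) 1)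

/-- The bilinear form B. -/
def Bform (ε lam : ℝ) (u v us vs : ℝ → ℝ) : ℝ :=
  lam * L2ip (fun x => v x - ε ^ ((3:ℝ)/2) * Dn 2 u x)
             (fun x => vs x - ε ^ ((3:ℝ)/2) * Dn 2 us x)
  + L2ip (fun x => ε ^ ((5:ℝ)/2) * Dn 2 v x + 4 * u x)
         (fun x => ε ^ ((3:ℝ)/2) * Dn 2 vs x + 4 * us x)

/-- The balanced norm. -/
def bal (ε : ℝ) (u v : ℝ → ℝ) : ℝ :=
  Real.sqrt (L2nsq u + ε^3 * L2nsq (Dn 2 u) + L2nsq v + ε^4 * L2nsq (Dn 2 v))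

/-- Clamped boundary conditions u(0)=u'(0)=u(1)=u'(1)=0. -/
def ClampedBC (u : ℝ → ℝ) : Prop :=
  u 0 = 0 ∧ Dn 1 u 0 = 0 ∧ u 1 = 0 ∧ Dn 1 u 1 = 0

lemma udo : UniqueDiffOn ℝ (Icc (0:ℝ) 1) := uniqueDiffOn_Icc one_pos

lemma uIcc01 : uIcc (0:ℝ) 1 = Icc 0 1 := uIcc_of_le zero_le_one

lemma ii_int {f : ℝ → ℝ} (hf : ContinuousOn f (Icc (0:ℝ) 1)) :
    IntervalIntegrable f volume 0 1 :=
  (hf.mono (by rw [uIcc01])).intervalIntegrable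

lemma ii_congr {f g : ℝ → ℝ} (h : ∀ x ∈ Icc (0:ℝ) 1, f x = g x) :
    ∫ x in (0:ℝ)..1, f x = ∫ x in (0:ℝ)..1, g x :=
  intervalIntegral.integral_congr (by rw [uIcc01]; exact h)

lemma L2nsq_nonneg (f : ℝ → ℝ) : 0 ≤ L2nsq f :=
  intervalIntegral.integral_nonneg zero_le_one (fun _ _ => sq_nonneg _)

lemma L2nrm_nonneg (f : ℝ → ℝ) : 0 ≤ L2nrm f := Real.sqrt_nonneg _

lemma contDiffOn_Dn {n m k : ℕ} {f : ℝ → ℝ} (hf : ContDiffOn ℝ n f (Icc (0:ℝ) 1))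
    (h : m + k ≤ n) : ContDiffOn ℝ m (Dn k f) (Icc (0:ℝ) 1) := by
  rw [Dn, iteratedDerivWithin_eq_equiv_comp]
  exact ContDiffOn.continuousLinearMap_comp
    ((ContinuousMultilinearMap.piFieldEquiv ℝ (Fin k) ℝ).symm.toContinuousLinearEquiv :
      (ℝ [×k]→L[ℝ] ℝ) →L[ℝ] ℝ)
    (fun x hx => (hf x hx).iteratedFDerivWithin_right udo (by exact_mod_cast h) hx)

lemma contOn_Dn {n k : ℕ} {f : ℝ → ℝ} (hf : ContDiffOn ℝ n f (Icc (0:ℝ) 1))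
    (h : k ≤ n) : ContinuousOn (Dn k f) (Icc (0:ℝ) 1) :=
  hf.continuousOn_iteratedDerivWithin (by exact_mod_cast h) udo

lemma Dn_comp (m k : ℕ) (f : ℝ → ℝ) :
    ∀ x ∈ Icc (0:ℝ) 1, Dn m (Dn k f) x = Dn (m + k) f x := by
  induction m with
  | zero => intro x hx; simp [Dn]
  | succ m ih =>
    intro x hx
    have h1 : Dn (m+1) (Dn k f) x = derivWithin (Dn m (Dn k f)) (Icc 0 1) x :=
      congrFun iteratedDerivWithin_succ x
    have h2 : Dn (m+1+k) f x = derivWithin (Dn (m+k) f) (Icc 0 1) x := by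
      have h3 : m + 1 + k = (m + k) + 1 := by ring
      rw [h3]
      exact congrFun iteratedDerivWithin_succ x
    rw [h1, h2]
    exact derivWithin_congr (fun y hy => ih y hy) (ih x hx)

/-- Cauchy–Schwarz for the interval L² pairing. -/
lemma L2_cauchy_schwarz {f g : ℝ → ℝ} (hf : ContinuousOn f (Icc (0:ℝ) 1))
    (hg : ContinuousOn g (Icc (0:ℝ) 1)) :
    L2ip f g ≤ L2nrm f * L2nrm g := by
  have key : ∀ t : ℝ, 0 ≤ L2nsq f * (t * t) + (2 * L2ip f g) * t + L2nsq g := by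
    intro t
    have i1 : IntervalIntegrable (fun x => (t*t) * (f x)^2) volume 0 1 :=
      ii_int (continuousOn_const.mul (hf.pow 2))
    have i2 : IntervalIntegrable (fun x => (2*t) * (f x * g x)) volume 0 1 :=
      ii_int (continuousOn_const.mul (hf.mul hg))
    have i3 : IntervalIntegrable (fun x => (g x)^2) volume 0 1 := ii_int (hg.pow 2)
    have e1 : (∫ x in (0:ℝ)..1, (t * f x + g x)^2)
        = (∫ x in (0:ℝ)..1, (t*t) * (f x)^2)
          + ((∫ x in (0:ℝ)..1, (2*t) * (f x * g x)) + (∫ x in (0:ℝ)..1, (g x)^2)) := by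
      rw [← intervalIntegral.integral_add i2 i3, ← intervalIntegral.integral_add i1 (i2.add i3)]
      exact ii_congr (fun x _ => by ring)
    have e2 : (∫ x in (0:ℝ)..1, (t*t) * (f x)^2) = (t*t) * L2nsq f :=
      intervalIntegral.integral_const_mul _ _
    have e3 : (∫ x in (0:ℝ)..1, (2*t) * (f x * g x)) = (2*t) * L2ip f g :=
      intervalIntegral.integral_const_mul _ _
    have e4 : (0:ℝ) ≤ ∫ x in (0:ℝ)..1, (t * f x + g x)^2 :=
      intervalIntegral.integral_nonneg zero_le_one (fun x _ => sq_nonneg _)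
    rw [e1, e2, e3] at e4
    simp only [L2nsq, L2ip]
    simp only [L2nsq, L2ip] at e4
    linarith
  have hd := discrim_le_zero key
  rw [discrim] at hd
  have h2 : (L2ip f g)^2 ≤ L2nsq f * L2nsq g := by nlinarith [hd]
  calc L2ip f g ≤ |L2ip f g| := le_abs_self _
  _ = Real.sqrt ((L2ip f g)^2) := (Real.sqrt_sq_eq_abs _).symm
  _ ≤ Real.sqrt (L2nsq f * L2nsq g) := Real.sqrt_le_sqrt h2
  _ = L2nrm f * L2nrm g := by
      rw [Real.sqrt_mul (L2nsq_nonneg f)]; rfl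

lemma hasDerivWithinAt_Dn {n k : ℕ} {f : ℝ → ℝ} (hf : ContDiffOn ℝ n f (Icc (0:ℝ) 1))
    (h : k + 1 ≤ n) {x : ℝ} (hx : x ∈ Icc (0:ℝ) 1) :
    HasDerivWithinAt (Dn k f) (Dn (k+1) f x) (Icc (0:ℝ) 1) x := by
  have hk : (k : WithTop ℕ∞) < (n : WithTop ℕ∞) := by exact_mod_cast h
  have hdiff : DifferentiableWithinAt ℝ (Dn k f) (Icc (0:ℝ) 1) x :=
    (hf.differentiableOn_iteratedDerivWithin hk udo) x hx
  have h2 := hdiff.hasDerivWithinAt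
  have h3 : Dn (k+1) f x = derivWithin (Dn k f) (Icc (0:ℝ) 1) x :=
    congrFun iteratedDerivWithin_succ x
  rw [h3]
  exact h2

/-- Integration by parts twice, with clamped boundary conditions on `w`. -/
lemma ibp2 {w q : ℝ → ℝ} (hw : ContDiffOn ℝ 2 w (Icc (0:ℝ) 1))
    (hq : ContDiffOn ℝ 2 q (Icc (0:ℝ) 1))
    (hw0 : w 0 = 0) (hw0' : Dn 1 w 0 = 0) (hw1 : w 1 = 0) (hw1' : Dn 1 w 1 = 0) :
    ∫ x in (0:ℝ)..1, w x * Dn 2 q x = ∫ x in (0:ℝ)..1, Dn 2 w x * q x := by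
  have hw' : ∀ x ∈ uIcc (0:ℝ) 1, HasDerivWithinAt w (Dn 1 w x) (uIcc (0:ℝ) 1) x := by
    rw [uIcc01]; intro x hx
    have := hasDerivWithinAt_Dn (k := 0) hw (by norm_num) hx
    simpa [Dn] using this
  have hw1d : ∀ x ∈ uIcc (0:ℝ) 1, HasDerivWithinAt (Dn 1 w) (Dn 2 w x) (uIcc (0:ℝ) 1) x := by
    rw [uIcc01]; intro x hx
    exact hasDerivWithinAt_Dn (k := 1) hw (by norm_num) hx
  have hq' : ∀ x ∈ uIcc (0:ℝ) 1, HasDerivWithinAt q (Dn 1 q x) (uIcc (0:ℝ) 1) x := by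
    rw [uIcc01]; intro x hx
    have := hasDerivWithinAt_Dn (k := 0) hq (by norm_num) hx
    simpa [Dn] using this
  have hq1d : ∀ x ∈ uIcc (0:ℝ) 1, HasDerivWithinAt (Dn 1 q) (Dn 2 q x) (uIcc (0:ℝ) 1) x := by
    rw [uIcc01]; intro x hx
    exact hasDerivWithinAt_Dn (k := 1) hq (by norm_num) hx
  have iw1 : IntervalIntegrable (Dn 1 w) volume 0 1 := ii_int (contOn_Dn hw (by norm_num))
  have iw2 : IntervalIntegrable (Dn 2 w) volume 0 1 := ii_int (contOn_Dn hw (by norm_num))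
  have iq1 : IntervalIntegrable (Dn 1 q) volume 0 1 := ii_int (contOn_Dn hq (by norm_num))
  have iq2 : IntervalIntegrable (Dn 2 q) volume 0 1 := ii_int (contOn_Dn hq (by norm_num))
  have cw : ContinuousOn w (Icc (0:ℝ) 1) := hw.continuousOn
  have cq : ContinuousOn q (Icc (0:ℝ) 1) := hq.continuousOn
  have eq1 := intervalIntegral.integral_deriv_mul_eq_sub_of_hasDerivWithinAt hw' hq1d iw1 iq2
  have eq2 := intervalIntegral.integral_deriv_mul_eq_sub_of_hasDerivWithinAt hw1d hq' iw2 iq1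
  rw [hw0, hw1] at eq1
  rw [hw0', hw1'] at eq2
  have iA : IntervalIntegrable (fun x => Dn 1 w x * Dn 1 q x) volume 0 1 :=
    ii_int ((contOn_Dn hw (by norm_num)).mul (contOn_Dn hq (by norm_num)))
  have iB : IntervalIntegrable (fun x => w x * Dn 2 q x) volume 0 1 :=
    ii_int (cw.mul (contOn_Dn hq (by norm_num)))
  have iC : IntervalIntegrable (fun x => Dn 2 w x * q x) volume 0 1 :=
    ii_int ((contOn_Dn hw (by norm_num)).mul cq)
  rw [intervalIntegral.integral_add iA iB] at eq1
  rw [intervalIntegral.integral_add iC iA] at eq2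
  simp only [zero_mul, sub_zero, zero_sub, neg_zero, add_zero] at eq1 eq2
  linarith

lemma ptwise (lam eps a b w W z Z : ℝ) (hlam : 3 ≤ lam) (hε0 : 0 < eps) (hε1 : eps ≤ 1)
    (ha2 : a^2 = eps^3) (hb : b = eps*a) :
    0 ≤ lam * ((z - a*W) * (z - a*W)) + (b*Z + 4*w) * (a*Z + 4*w)
      - (w^2 + eps^3*W^2 + z^2 + eps^4*Z^2) - (4*(a+b)) * (w*Z - W*z) := by
  subst hb
  rw [← ha2, show eps^4 = eps * a^2 by rw [ha2]; ring]
  nlinarith [mul_nonneg (show (0:ℝ) ≤ 2*lam - 2 - (4 + 4*eps - 2*lam) by linarith)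
      (sq_nonneg (z - a*W)),
    mul_nonneg (show (0:ℝ) ≤ (4 + 4*eps - 2*lam) + (2*lam - 2) by linarith)
      (sq_nonneg (z + a*W)),
    sq_nonneg w]

lemma sqrt_coef {c m : ℝ} (hc : 0 ≤ c) : c * Real.sqrt m = Real.sqrt (c^2 * m) := by
  rw [Real.sqrt_mul (sq_nonneg c), Real.sqrt_sq hc]

lemma sqrt_add_le {x y : ℝ} (hx : 0 ≤ x) (hy : 0 ≤ y) :
    Real.sqrt (x + y) ≤ Real.sqrt x + Real.sqrt y := by
  rw [show Real.sqrt x + Real.sqrt y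
      = Real.sqrt ((Real.sqrt x + Real.sqrt y)^2) from
      (Real.sqrt_sq (by positivity)).symm]
  apply Real.sqrt_le_sqrt
  nlinarith [Real.sq_sqrt hx, Real.sq_sqrt hy, Real.sqrt_nonneg x, Real.sqrt_nonneg y]

lemma le_of_sq_le' {e c : ℝ} (he : 0 ≤ e) (hc : 0 ≤ c) (h : e^2 ≤ c * e) : e ≤ c := by
  rcases he.eq_or_lt with h0 | h0
  · linarith
  · exact le_of_mul_le_mul_right (by nlinarith) h0

lemma bal_nonneg (ε : ℝ) (w z : ℝ → ℝ) : 0 ≤ bal ε w z := Real.sqrt_nonneg _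

lemma bal_sq {ε : ℝ} (hε : 0 ≤ ε) (w z : ℝ → ℝ) :
    bal ε w z ^ 2
      = L2nsq w + ε^3 * L2nsq (Dn 2 w) + L2nsq z + ε^4 * L2nsq (Dn 2 z) := by
  rw [bal, Real.sq_sqrt]
  have h3 : (0:ℝ) ≤ ε^3 := pow_nonneg hε 3
  have h4 : (0:ℝ) ≤ ε^4 := pow_nonneg hε 4
  have := L2nsq_nonneg w; have := L2nsq_nonneg (Dn 2 w)
  have := L2nsq_nonneg z; have := L2nsq_nonneg (Dn 2 z)
  nlinarith [mul_nonneg h3 (L2nsq_nonneg (Dn 2 w)), mul_nonneg h4 (L2nsq_nonneg (Dn 2 z))]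

/-- Coercivity of B in the balanced norm. -/
lemma coercive {ε lam : ℝ} (hε0 : 0 < ε) (hε1 : ε ≤ 1) (hlam : 3 ≤ lam)
    {w z : ℝ → ℝ} (hw : ContDiffOn ℝ 2 w (Icc (0:ℝ) 1))
    (hz : ContDiffOn ℝ 2 z (Icc (0:ℝ) 1)) (hbc : ClampedBC w) :
    bal ε w z ^ 2 ≤ Bform ε lam w z w z := by
  obtain ⟨hw0, hw0', hw1, hw1'⟩ := hbc
  set a := ε ^ ((3:ℝ)/2) with ha_def
  set b := ε ^ ((5:ℝ)/2) with hb_def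
  have ha : 0 < a := Real.rpow_pos_of_pos hε0 _
  have ha2 : a^2 = ε^3 := by
    rw [ha_def, ← Real.rpow_natCast (ε ^ ((3:ℝ)/2)) 2, ← Real.rpow_mul hε0.le,
      ← Real.rpow_natCast ε 3]
    norm_num
  have hb : b = ε * a := by
    rw [hb_def, ha_def, show (5:ℝ)/2 = 1 + 3/2 by norm_num, Real.rpow_add hε0,
      Real.rpow_one]
  -- continuity facts
  have cw : ContinuousOn w (Icc (0:ℝ) 1) := hw.continuousOn
  have cz : ContinuousOn z (Icc (0:ℝ) 1) := hz.continuousOn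
  have cW : ContinuousOn (Dn 2 w) (Icc (0:ℝ) 1) := contOn_Dn hw (by norm_num)
  have cZ : ContinuousOn (Dn 2 z) (Icc (0:ℝ) 1) := contOn_Dn hz (by norm_num)
  -- the IBP identity
  have iwZ : IntervalIntegrable (fun x => w x * Dn 2 z x) volume 0 1 := ii_int (cw.mul cZ)
  have iWz : IntervalIntegrable (fun x => Dn 2 w x * z x) volume 0 1 := ii_int (cW.mul cz)
  have hibp : (∫ x in (0:ℝ)..1, (w x * Dn 2 z x - Dn 2 w x * z x)) = 0 := by
    rw [intervalIntegral.integral_sub iwZ iWz,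
      ibp2 hw hz hw0 hw0' hw1 hw1', sub_self]
  -- integrability of the pieces
  have iP : IntervalIntegrable
      (fun x => lam * ((z x - a * Dn 2 w x) * (z x - a * Dn 2 w x))) volume 0 1 :=
    ii_int (continuousOn_const.mul ((cz.sub (continuousOn_const.mul cW)).mul
      (cz.sub (continuousOn_const.mul cW))))
  have iQ : IntervalIntegrable
      (fun x => (b * Dn 2 z x + 4 * w x) * (a * Dn 2 z x + 4 * w x)) volume 0 1 :=
    ii_int (((continuousOn_const.mul cZ).add (continuousOn_const.mul cw)).mul
      ((continuousOn_const.mul cZ).add (continuousOn_const.mul cw)))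
  have iS : IntervalIntegrable
      (fun x => (w x)^2 + ε^3 * (Dn 2 w x)^2 + (z x)^2 + ε^4 * (Dn 2 z x)^2) volume 0 1 :=
    ii_int (((((cw.pow 2).add (continuousOn_const.mul (cW.pow 2))).add (cz.pow 2)).add
      (continuousOn_const.mul (cZ.pow 2))))
  have iH : IntervalIntegrable
      (fun x => (4*(a+b)) * (w x * Dn 2 z x - Dn 2 w x * z x)) volume 0 1 :=
    ii_int (continuousOn_const.mul ((cw.mul cZ).sub (cW.mul cz)))
  -- the combined nonnegative integrand
  have hnn : (0:ℝ) ≤ ∫ x in (0:ℝ)..1,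
      (lam * ((z x - a * Dn 2 w x) * (z x - a * Dn 2 w x))
        + (b * Dn 2 z x + 4 * w x) * (a * Dn 2 z x + 4 * w x)
        - ((w x)^2 + ε^3 * (Dn 2 w x)^2 + (z x)^2 + ε^4 * (Dn 2 z x)^2)
        - (4*(a+b)) * (w x * Dn 2 z x - Dn 2 w x * z x)) :=
    intervalIntegral.integral_nonneg zero_le_one
      (fun x _ => ptwise lam ε a b (w x) (Dn 2 w x) (z x) (Dn 2 z x) hlam hε0 hε1 ha2 hb)
  -- split the combined integral
  have hsplit : (∫ x in (0:ℝ)..1,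
      (lam * ((z x - a * Dn 2 w x) * (z x - a * Dn 2 w x))
        + (b * Dn 2 z x + 4 * w x) * (a * Dn 2 z x + 4 * w x)
        - ((w x)^2 + ε^3 * (Dn 2 w x)^2 + (z x)^2 + ε^4 * (Dn 2 z x)^2)
        - (4*(a+b)) * (w x * Dn 2 z x - Dn 2 w x * z x)))
      = (∫ x in (0:ℝ)..1, lam * ((z x - a * Dn 2 w x) * (z x - a * Dn 2 w x)))
        + (∫ x in (0:ℝ)..1, (b * Dn 2 z x + 4 * w x) * (a * Dn 2 z x + 4 * w x))
        - (∫ x in (0:ℝ)..1, ((w x)^2 + ε^3 * (Dn 2 w x)^2 + (z x)^2 + ε^4 * (Dn 2 z x)^2))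
        - (∫ x in (0:ℝ)..1, (4*(a+b)) * (w x * Dn 2 z x - Dn 2 w x * z x)) := by
    rw [← intervalIntegral.integral_add iP iQ,
      ← intervalIntegral.integral_sub (iP.add iQ) iS,
      ← intervalIntegral.integral_sub ((iP.add iQ).sub iS) iH]
  -- identify the pieces
  have hB : Bform ε lam w z w z
      = (∫ x in (0:ℝ)..1, lam * ((z x - a * Dn 2 w x) * (z x - a * Dn 2 w x)))
        + (∫ x in (0:ℝ)..1, (b * Dn 2 z x + 4 * w x) * (a * Dn 2 z x + 4 * w x)) := by
    rw [Bform, L2ip, L2ip, intervalIntegral.integral_const_mul]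
  have hS : bal ε w z ^ 2
      = ∫ x in (0:ℝ)..1, ((w x)^2 + ε^3 * (Dn 2 w x)^2 + (z x)^2 + ε^4 * (Dn 2 z x)^2) := by
    rw [bal_sq hε0.le]
    have i1 : IntervalIntegrable (fun x => (w x)^2) volume 0 1 := ii_int (cw.pow 2)
    have i2 : IntervalIntegrable (fun x => ε^3 * (Dn 2 w x)^2) volume 0 1 :=
      ii_int (continuousOn_const.mul (cW.pow 2))
    have i3 : IntervalIntegrable (fun x => (z x)^2) volume 0 1 := ii_int (cz.pow 2)
    have i4 : IntervalIntegrable (fun x => ε^4 * (Dn 2 z x)^2) volume 0 1 :=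
      ii_int (continuousOn_const.mul (cZ.pow 2))
    rw [show (∫ x in (0:ℝ)..1, ((w x)^2 + ε^3 * (Dn 2 w x)^2 + (z x)^2 + ε^4 * (Dn 2 z x)^2))
        = (∫ x in (0:ℝ)..1, (w x)^2) + (∫ x in (0:ℝ)..1, ε^3 * (Dn 2 w x)^2)
          + (∫ x in (0:ℝ)..1, (z x)^2) + (∫ x in (0:ℝ)..1, ε^4 * (Dn 2 z x)^2) by
      rw [← intervalIntegral.integral_add i1 i2, ← intervalIntegral.integral_add (i1.add i2) i3,
        ← intervalIntegral.integral_add ((i1.add i2).add i3) i4]]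
    rw [intervalIntegral.integral_const_mul, intervalIntegral.integral_const_mul]
    rfl
  have hHzero : (∫ x in (0:ℝ)..1, (4*(a+b)) * (w x * Dn 2 z x - Dn 2 w x * z x)) = 0 := by
    rw [intervalIntegral.integral_const_mul, hibp, mul_zero]
  rw [hsplit, hHzero] at hnn
  linarith [hnn, hB.symm.le, hS.le]

lemma comp_le_bal {ε : ℝ} (hε : 0 ≤ ε) (w z : ℝ → ℝ) :
    L2nrm w ≤ bal ε w z ∧ Real.sqrt (ε^3) * L2nrm (Dn 2 w) ≤ bal ε w z ∧
    L2nrm z ≤ bal ε w z ∧ ε^2 * L2nrm (Dn 2 z) ≤ bal ε w z := by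
  have h1 := L2nsq_nonneg w
  have h2 := mul_nonneg (pow_nonneg hε 3) (L2nsq_nonneg (Dn 2 w))
  have h3 := L2nsq_nonneg z
  have h4 := mul_nonneg (pow_nonneg hε 4) (L2nsq_nonneg (Dn 2 z))
  refine ⟨Real.sqrt_le_sqrt (by linarith), ?_, Real.sqrt_le_sqrt (by linarith), ?_⟩
  · rw [L2nrm, ← Real.sqrt_mul (pow_nonneg hε 3)]
    exact Real.sqrt_le_sqrt (by linarith)
  · rw [L2nrm, sqrt_coef (sq_nonneg ε), show (ε^2)^2 = ε^4 by ring]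
    exact Real.sqrt_le_sqrt (by linarith)

/-- Continuity of B against the balanced norm (after integration by parts). -/
lemma bound_B {ε lam : ℝ} (hε0 : 0 < ε) (hε1 : ε ≤ 1) (hlam : 3 ≤ lam)
    {w z p q : ℝ → ℝ} (hw : ContDiffOn ℝ 2 w (Icc (0:ℝ) 1))
    (hz : ContDiffOn ℝ 2 z (Icc (0:ℝ) 1)) (hp : ContDiffOn ℝ 2 p (Icc (0:ℝ) 1))
    (hq : ContDiffOn ℝ 2 q (Icc (0:ℝ) 1)) (hbcw : ClampedBC w) (hbcp : ClampedBC p) :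
    Bform ε lam w z p q ≤ (2*lam + 25) * (bal ε w z * bal ε p q) := by
  set a := ε ^ ((3:ℝ)/2) with ha_def
  set b := ε ^ ((5:ℝ)/2) with hb_def
  have ha : 0 < a := Real.rpow_pos_of_pos hε0 _
  have ha2 : a^2 = ε^3 := by
    rw [ha_def, ← Real.rpow_natCast (ε ^ ((3:ℝ)/2)) 2, ← Real.rpow_mul hε0.le,
      ← Real.rpow_natCast ε 3]
    norm_num
  have hb : b = ε * a := by
    rw [hb_def, ha_def, show (5:ℝ)/2 = 1 + 3/2 by norm_num, Real.rpow_add hε0,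
      Real.rpow_one]
  have hsa : Real.sqrt (ε^3) = a := by rw [← ha2, Real.sqrt_sq ha.le]
  -- continuity
  have cw : ContinuousOn w (Icc (0:ℝ) 1) := hw.continuousOn
  have cz : ContinuousOn z (Icc (0:ℝ) 1) := hz.continuousOn
  have cp : ContinuousOn p (Icc (0:ℝ) 1) := hp.continuousOn
  have cq : ContinuousOn q (Icc (0:ℝ) 1) := hq.continuousOn
  have cW : ContinuousOn (Dn 2 w) (Icc (0:ℝ) 1) := contOn_Dn hw (by norm_num)
  have cZ : ContinuousOn (Dn 2 z) (Icc (0:ℝ) 1) := contOn_Dn hz (by norm_num)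
  have cP : ContinuousOn (Dn 2 p) (Icc (0:ℝ) 1) := contOn_Dn hp (by norm_num)
  have cQ : ContinuousOn (Dn 2 q) (Icc (0:ℝ) 1) := contOn_Dn hq (by norm_num)
  -- component bounds
  obtain ⟨cb1, cb2', cb3, cb4⟩ := comp_le_bal hε0.le w z
  obtain ⟨db1, db2', db3, db4⟩ := comp_le_bal hε0.le p q
  rw [hsa] at cb2' db2'
  have Benn := bal_nonneg ε w z
  have Bpnn := bal_nonneg ε p q
  -- bound on the first (lam) term
  have hd1 : L2nrm (fun x => z x - a * Dn 2 w x) ≤ Real.sqrt 2 * bal ε w z := by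
    have hmono : L2nsq (fun x => z x - a * Dn 2 w x)
        ≤ ∫ x in (0:ℝ)..1, (2 * (z x)^2 + 2 * (a^2 * (Dn 2 w x)^2)) := by
      rw [L2nsq]
      apply intervalIntegral.integral_mono_on zero_le_one
      · exact ii_int ((cz.sub (continuousOn_const.mul cW)).pow 2)
      · exact ii_int ((continuousOn_const.mul (cz.pow 2)).add
          (continuousOn_const.mul (continuousOn_const.mul (cW.pow 2))))
      · intro x _; nlinarith [sq_nonneg (z x + a * Dn 2 w x)]
    have hsum : (∫ x in (0:ℝ)..1, (2 * (z x)^2 + 2 * (a^2 * (Dn 2 w x)^2)))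
        = 2 * L2nsq z + 2 * (a^2 * L2nsq (Dn 2 w)) := by
      rw [intervalIntegral.integral_add
          (ii_int (f := fun x => 2 * (z x)^2) (continuousOn_const.mul (cz.pow 2)))
          (ii_int (f := fun x => 2 * (a^2 * (Dn 2 w x)^2))
            (continuousOn_const.mul (continuousOn_const.mul (cW.pow 2)))),
        intervalIntegral.integral_const_mul, intervalIntegral.integral_const_mul,
        intervalIntegral.integral_const_mul]
      rfl
    have hle : L2nsq (fun x => z x - a * Dn 2 w x) ≤ 2 * bal ε w z ^ 2 := by
      rw [bal_sq hε0.le]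
      have h1 := L2nsq_nonneg w
      have h4 := mul_nonneg (pow_nonneg hε0.le 4) (L2nsq_nonneg (Dn 2 z))
      have heq : a^2 * L2nsq (Dn 2 w) = ε^3 * L2nsq (Dn 2 w) := by rw [ha2]
      linarith [hmono, hsum.le]
    calc L2nrm (fun x => z x - a * Dn 2 w x) ≤ Real.sqrt (2 * bal ε w z ^ 2) :=
          Real.sqrt_le_sqrt hle
    _ = Real.sqrt 2 * bal ε w z := by
        rw [Real.sqrt_mul (by norm_num), Real.sqrt_sq Benn]
  have hd2 : L2nrm (fun x => q x - a * Dn 2 p x) ≤ Real.sqrt 2 * bal ε p q := by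
    have hmono : L2nsq (fun x => q x - a * Dn 2 p x)
        ≤ ∫ x in (0:ℝ)..1, (2 * (q x)^2 + 2 * (a^2 * (Dn 2 p x)^2)) := by
      rw [L2nsq]
      apply intervalIntegral.integral_mono_on zero_le_one
      · exact ii_int ((cq.sub (continuousOn_const.mul cP)).pow 2)
      · exact ii_int ((continuousOn_const.mul (cq.pow 2)).add
          (continuousOn_const.mul (continuousOn_const.mul (cP.pow 2))))
      · intro x _; nlinarith [sq_nonneg (q x + a * Dn 2 p x)]
    have hsum : (∫ x in (0:ℝ)..1, (2 * (q x)^2 + 2 * (a^2 * (Dn 2 p x)^2)))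
        = 2 * L2nsq q + 2 * (a^2 * L2nsq (Dn 2 p)) := by
      rw [intervalIntegral.integral_add
          (ii_int (f := fun x => 2 * (q x)^2) (continuousOn_const.mul (cq.pow 2)))
          (ii_int (f := fun x => 2 * (a^2 * (Dn 2 p x)^2))
            (continuousOn_const.mul (continuousOn_const.mul (cP.pow 2)))),
        intervalIntegral.integral_const_mul, intervalIntegral.integral_const_mul,
        intervalIntegral.integral_const_mul]
      rfl
    have hle : L2nsq (fun x => q x - a * Dn 2 p x) ≤ 2 * bal ε p q ^ 2 := by
      rw [bal_sq hε0.le]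
      have h1 := L2nsq_nonneg p
      have h4 := mul_nonneg (pow_nonneg hε0.le 4) (L2nsq_nonneg (Dn 2 q))
      have heq : a^2 * L2nsq (Dn 2 p) = ε^3 * L2nsq (Dn 2 p) := by rw [ha2]
      linarith [hmono, hsum.le]
    calc L2nrm (fun x => q x - a * Dn 2 p x) ≤ Real.sqrt (2 * bal ε p q ^ 2) :=
          Real.sqrt_le_sqrt hle
    _ = Real.sqrt 2 * bal ε p q := by
        rw [Real.sqrt_mul (by norm_num), Real.sqrt_sq Bpnn]
  -- the lam term
  have hT1 : lam * L2ip (fun x => z x - a * Dn 2 w x) (fun x => q x - a * Dn 2 p x)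
      ≤ 2 * lam * (bal ε w z * bal ε p q) := by
    have hcs : L2ip (fun x => z x - a * Dn 2 w x) (fun x => q x - a * Dn 2 p x)
        ≤ L2nrm (fun x => z x - a * Dn 2 w x) * L2nrm (fun x => q x - a * Dn 2 p x) :=
      L2_cauchy_schwarz (cz.sub (continuousOn_const.mul cW))
        (cq.sub (continuousOn_const.mul cP))
    have h2 : L2nrm (fun x => z x - a * Dn 2 w x) * L2nrm (fun x => q x - a * Dn 2 p x)
        ≤ (Real.sqrt 2 * bal ε w z) * (Real.sqrt 2 * bal ε p q) :=
      mul_le_mul hd1 hd2 (L2nrm_nonneg _) (by positivity)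
    have h3 : (Real.sqrt 2 * bal ε w z) * (Real.sqrt 2 * bal ε p q)
        = 2 * (bal ε w z * bal ε p q) := by
      rw [show (Real.sqrt 2 * bal ε w z) * (Real.sqrt 2 * bal ε p q)
          = (Real.sqrt 2 * Real.sqrt 2) * (bal ε w z * bal ε p q) by ring,
        Real.mul_self_sqrt (by norm_num)]
    have hlam0 : (0:ℝ) ≤ lam := by linarith
    have k1 := mul_le_mul_of_nonneg_left hcs hlam0
    have k2 := mul_le_mul_of_nonneg_left (h2.trans h3.le) hlam0
    nlinarith [k1, k2]
  -- split the second term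
  have i1 : IntervalIntegrable (fun x => (a*b) * (Dn 2 z x * Dn 2 q x)) volume 0 1 :=
    ii_int (continuousOn_const.mul (cZ.mul cQ))
  have i2 : IntervalIntegrable (fun x => (4*b) * (p x * Dn 2 z x)) volume 0 1 :=
    ii_int (continuousOn_const.mul (cp.mul cZ))
  have i3 : IntervalIntegrable (fun x => (4*a) * (w x * Dn 2 q x)) volume 0 1 :=
    ii_int (continuousOn_const.mul (cw.mul cQ))
  have i4 : IntervalIntegrable (fun x => 16 * (w x * p x)) volume 0 1 :=
    ii_int (continuousOn_const.mul (cw.mul cp))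
  have hsplit2 : L2ip (fun x => b * Dn 2 z x + 4 * w x) (fun x => a * Dn 2 q x + 4 * p x)
      = (a*b) * L2ip (Dn 2 z) (Dn 2 q) + ((4*b) * L2ip p (Dn 2 z)
        + ((4*a) * L2ip w (Dn 2 q) + 16 * L2ip w p)) := by
    rw [L2ip, L2ip, L2ip, L2ip, L2ip,
      ← intervalIntegral.integral_const_mul (a*b), ← intervalIntegral.integral_const_mul (4*b),
      ← intervalIntegral.integral_const_mul (4*a), ← intervalIntegral.integral_const_mul 16,
      ← intervalIntegral.integral_add i3 i4, ← intervalIntegral.integral_add i2 (i3.add i4),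
      ← intervalIntegral.integral_add i1 (i2.add (i3.add i4))]
    exact ii_congr (fun x _ => by ring)
  -- IBP on two of the pieces
  obtain ⟨hp0, hp0', hp1, hp1'⟩ := hbcp
  obtain ⟨hw0, hw0', hw1, hw1'⟩ := hbcw
  have hI2 : L2ip p (Dn 2 z) = L2ip (Dn 2 p) z := ibp2 hp hz hp0 hp0' hp1 hp1'
  have hI3 : L2ip w (Dn 2 q) = L2ip (Dn 2 w) q := ibp2 hw hq hw0 hw0' hw1 hw1'
  -- Cauchy-Schwarz bounds
  have hc1 : L2ip (Dn 2 z) (Dn 2 q) ≤ L2nrm (Dn 2 z) * L2nrm (Dn 2 q) :=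
    L2_cauchy_schwarz cZ cQ
  have hc2 : L2ip (Dn 2 p) z ≤ L2nrm (Dn 2 p) * L2nrm z := L2_cauchy_schwarz cP cz
  have hc3 : L2ip (Dn 2 w) q ≤ L2nrm (Dn 2 w) * L2nrm q := L2_cauchy_schwarz cW cq
  have hc4 : L2ip w p ≤ L2nrm w * L2nrm p := L2_cauchy_schwarz cw cp
  -- term bounds
  have hab4 : a * b = ε^2 * ε^2 := by rw [hb]; linear_combination ε * ha2
  have nZ := L2nrm_nonneg (Dn 2 z); have nQ := L2nrm_nonneg (Dn 2 q)
  have nP := L2nrm_nonneg (Dn 2 p); have nW := L2nrm_nonneg (Dn 2 w)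
  have nz := L2nrm_nonneg z; have nq := L2nrm_nonneg q
  have nw := L2nrm_nonneg w; have np := L2nrm_nonneg p
  have hT2 : (a*b) * L2ip (Dn 2 z) (Dn 2 q) ≤ bal ε w z * bal ε p q := by
    have h1 : (a*b) * L2ip (Dn 2 z) (Dn 2 q) ≤ (a*b) * (L2nrm (Dn 2 z) * L2nrm (Dn 2 q)) :=
      mul_le_mul_of_nonneg_left hc1 (by positivity)
    have h2 : (a*b) * (L2nrm (Dn 2 z) * L2nrm (Dn 2 q))
        = (ε^2 * L2nrm (Dn 2 z)) * (ε^2 * L2nrm (Dn 2 q)) := by rw [hab4]; ring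
    calc (a*b) * L2ip (Dn 2 z) (Dn 2 q) ≤ (ε^2 * L2nrm (Dn 2 z)) * (ε^2 * L2nrm (Dn 2 q)) := by
          rw [← h2]; exact h1
    _ ≤ bal ε w z * bal ε p q := by
          apply mul_le_mul cb4 db4 (by positivity) Benn
  have hT3 : (4*b) * L2ip p (Dn 2 z) ≤ 4 * (bal ε w z * bal ε p q) := by
    rw [hI2]
    have h1 : (4*b) * L2ip (Dn 2 p) z ≤ (4*b) * (L2nrm (Dn 2 p) * L2nrm z) := by
      apply mul_le_mul_of_nonneg_left hc2
      rw [hb]; positivity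
    have h2 : (4*b) * (L2nrm (Dn 2 p) * L2nrm z)
        = 4 * ε * ((a * L2nrm (Dn 2 p)) * L2nrm z) := by rw [hb]; ring
    have h3 : (a * L2nrm (Dn 2 p)) * L2nrm z ≤ bal ε p q * bal ε w z :=
      mul_le_mul db2' cb3 nz (bal_nonneg _ _ _)
    have h4 : 4 * ε * ((a * L2nrm (Dn 2 p)) * L2nrm z) ≤ 4 * 1 * (bal ε p q * bal ε w z) := by
      apply mul_le_mul (by linarith) h3 (by positivity) (by norm_num)
    linarith [h1, h2.le, h2.ge, h4]
  have hT4 : (4*a) * L2ip w (Dn 2 q) ≤ 4 * (bal ε w z * bal ε p q) := by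
    rw [hI3]
    have h1 : (4*a) * L2ip (Dn 2 w) q ≤ (4*a) * (L2nrm (Dn 2 w) * L2nrm q) :=
      mul_le_mul_of_nonneg_left hc3 (by positivity)
    have h2 : (4*a) * (L2nrm (Dn 2 w) * L2nrm q)
        = 4 * ((a * L2nrm (Dn 2 w)) * L2nrm q) := by ring
    have h3 : (a * L2nrm (Dn 2 w)) * L2nrm q ≤ bal ε w z * bal ε p q :=
      mul_le_mul cb2' db3 nq (bal_nonneg _ _ _)
    linarith [h1, h2.le, h2.ge, mul_le_mul_of_nonneg_left h3 (show (0:ℝ) ≤ 4 by norm_num)]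
  have hT5 : 16 * L2ip w p ≤ 16 * (bal ε w z * bal ε p q) := by
    have h3 : L2nrm w * L2nrm p ≤ bal ε w z * bal ε p q :=
      mul_le_mul cb1 db1 np (bal_nonneg _ _ _)
    linarith [mul_le_mul_of_nonneg_left hc4 (show (0:ℝ) ≤ 16 by norm_num),
      mul_le_mul_of_nonneg_left h3 (show (0:ℝ) ≤ 16 by norm_num)]
  -- assemble
  have hBf : Bform ε lam w z p q
      = lam * L2ip (fun x => z x - a * Dn 2 w x) (fun x => q x - a * Dn 2 p x)
        + L2ip (fun x => b * Dn 2 z x + 4 * w x) (fun x => a * Dn 2 q x + 4 * p x) := rfl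
  rw [hBf, hsplit2]
  linarith [hT1, hT2, hT3, hT4, hT5]

lemma clamped_sub {u w : ℝ → ℝ} (hu : ContDiffOn ℝ 2 u (Icc (0:ℝ) 1))
    (hw : ContDiffOn ℝ 2 w (Icc (0:ℝ) 1)) (hcu : ClampedBC u) (hcw : ClampedBC w) :
    ClampedBC (fun x => u x - w x) := by
  obtain ⟨hu0, hu0', hu1, hu1'⟩ := hcu
  obtain ⟨hw0, hw0', hw1, hw1'⟩ := hcw
  have h0 : (0:ℝ) ∈ Icc (0:ℝ) 1 := by norm_num
  have h1 : (1:ℝ) ∈ Icc (0:ℝ) 1 := by norm_num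
  have hu1le : ContDiffOn ℝ 1 u (Icc (0:ℝ) 1) := hu.of_le (by norm_num)
  have hw1le : ContDiffOn ℝ 1 w (Icc (0:ℝ) 1) := hw.of_le (by norm_num)
  have key : ∀ x ∈ Icc (0:ℝ) 1, Dn 1 (fun y => u y - w y) x = Dn 1 u x - Dn 1 w x := by
    intro x hx
    have heq : (fun y => u y - w y) = u - w := rfl
    rw [Dn, heq]
    exact iteratedDerivWithin_sub hx udo (hu1le x hx) (hw1le x hx)
  refine ⟨by simp [hu0, hw0], ?_, by simp [hu1, hw1], ?_⟩
  · rw [key 0 h0, hu0', hw0', sub_zero]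
  · rw [key 1 h1, hu1', hw1', sub_zero]

lemma Dn2_combo {c : ℝ} {f v : ℝ → ℝ} (hf : ContDiffOn ℝ 2 f (Icc (0:ℝ) 1))
    (hv : ContDiffOn ℝ 2 v (Icc (0:ℝ) 1)) :
    ∀ x ∈ Icc (0:ℝ) 1, Dn 2 (fun y => c * f y - v y) x = c * Dn 2 f x - Dn 2 v x := by
  intro x hx
  have heq : (fun y => c * f y - v y) = (fun y => c * f y) - v := rfl
  rw [Dn, heq, iteratedDerivWithin_sub hx udo ((contDiffOn_const.mul hf) x hx) (hv x hx),
    iteratedDerivWithin_const_mul hx udo c (hf x hx)]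
  rfl

lemma Dn2_const_mul {c : ℝ} {f : ℝ → ℝ} (hf : ContDiffOn ℝ 2 f (Icc (0:ℝ) 1)) :
    ∀ x ∈ Icc (0:ℝ) 1, Dn 2 (fun y => c * f y) x = c * Dn 2 f x := by
  intro x hx
  rw [Dn, iteratedDerivWithin_const_mul hx udo c (hf x hx)]
  rfl

/-- Additivity of B in the test pair. -/
lemma Bform_split (ε lam : ℝ) {w z pa qa p₁ q₁ p₂ q₂ : ℝ → ℝ}
    (hw : ContDiffOn ℝ 2 w (Icc (0:ℝ) 1)) (hz : ContDiffOn ℝ 2 z (Icc (0:ℝ) 1))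
    (hp₁ : ContDiffOn ℝ 2 p₁ (Icc (0:ℝ) 1)) (hq₁ : ContDiffOn ℝ 2 q₁ (Icc (0:ℝ) 1))
    (hp₂ : ContDiffOn ℝ 2 p₂ (Icc (0:ℝ) 1)) (hq₂ : ContDiffOn ℝ 2 q₂ (Icc (0:ℝ) 1))
    (h1 : ∀ x, pa x = p₁ x + p₂ x) (h2 : ∀ x, qa x = q₁ x + q₂ x) :
    Bform ε lam w z pa qa = Bform ε lam w z p₁ q₁ + Bform ε lam w z p₂ q₂ := by
  have hpa : pa = fun x => p₁ x + p₂ x := funext h1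
  have hqa : qa = fun x => q₁ x + q₂ x := funext h2
  subst hpa hqa
  set a := ε ^ ((3:ℝ)/2) with ha_def
  set b := ε ^ ((5:ℝ)/2) with hb_def
  have cw : ContinuousOn w (Icc (0:ℝ) 1) := hw.continuousOn
  have cz : ContinuousOn z (Icc (0:ℝ) 1) := hz.continuousOn
  have cW : ContinuousOn (Dn 2 w) (Icc (0:ℝ) 1) := contOn_Dn hw (by norm_num)
  have cZ : ContinuousOn (Dn 2 z) (Icc (0:ℝ) 1) := contOn_Dn hz (by norm_num)
  have cp₁ : ContinuousOn p₁ (Icc (0:ℝ) 1) := hp₁.continuousOn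
  have cp₂ : ContinuousOn p₂ (Icc (0:ℝ) 1) := hp₂.continuousOn
  have cq₁ : ContinuousOn q₁ (Icc (0:ℝ) 1) := hq₁.continuousOn
  have cq₂ : ContinuousOn q₂ (Icc (0:ℝ) 1) := hq₂.continuousOn
  have cP₁ : ContinuousOn (Dn 2 p₁) (Icc (0:ℝ) 1) := contOn_Dn hp₁ (by norm_num)
  have cP₂ : ContinuousOn (Dn 2 p₂) (Icc (0:ℝ) 1) := contOn_Dn hp₂ (by norm_num)
  have cQ₁ : ContinuousOn (Dn 2 q₁) (Icc (0:ℝ) 1) := contOn_Dn hq₁ (by norm_num)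
  have cQ₂ : ContinuousOn (Dn 2 q₂) (Icc (0:ℝ) 1) := contOn_Dn hq₂ (by norm_num)
  have hDp : ∀ x ∈ Icc (0:ℝ) 1,
      Dn 2 (fun y => p₁ y + p₂ y) x = Dn 2 p₁ x + Dn 2 p₂ x := by
    intro x hx
    have heq : (fun y => p₁ y + p₂ y) = p₁ + p₂ := rfl
    rw [Dn, heq]
    exact iteratedDerivWithin_add hx udo (hp₁ x hx) (hp₂ x hx)
  have hDq : ∀ x ∈ Icc (0:ℝ) 1,
      Dn 2 (fun y => q₁ y + q₂ y) x = Dn 2 q₁ x + Dn 2 q₂ x := by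
    intro x hx
    have heq : (fun y => q₁ y + q₂ y) = q₁ + q₂ := rfl
    rw [Dn, heq]
    exact iteratedDerivWithin_add hx udo (hq₁ x hx) (hq₂ x hx)
  have iA : IntervalIntegrable
      (fun x => (z x - a * Dn 2 w x) * (q₁ x - a * Dn 2 p₁ x)) volume 0 1 :=
    ii_int ((cz.sub (continuousOn_const.mul cW)).mul (cq₁.sub (continuousOn_const.mul cP₁)))
  have iB : IntervalIntegrable
      (fun x => (z x - a * Dn 2 w x) * (q₂ x - a * Dn 2 p₂ x)) volume 0 1 :=
    ii_int ((cz.sub (continuousOn_const.mul cW)).mul (cq₂.sub (continuousOn_const.mul cP₂)))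
  have iC : IntervalIntegrable
      (fun x => (b * Dn 2 z x + 4 * w x) * (a * Dn 2 q₁ x + 4 * p₁ x)) volume 0 1 :=
    ii_int (((continuousOn_const.mul cZ).add (continuousOn_const.mul cw)).mul
      ((continuousOn_const.mul cQ₁).add (continuousOn_const.mul cp₁)))
  have iD : IntervalIntegrable
      (fun x => (b * Dn 2 z x + 4 * w x) * (a * Dn 2 q₂ x + 4 * p₂ x)) volume 0 1 :=
    ii_int (((continuousOn_const.mul cZ).add (continuousOn_const.mul cw)).mul
      ((continuousOn_const.mul cQ₂).add (continuousOn_const.mul cp₂)))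
  have e1 : L2ip (fun x => z x - a * Dn 2 w x)
      (fun x => (fun y => q₁ y + q₂ y) x - a * Dn 2 (fun y => p₁ y + p₂ y) x)
      = L2ip (fun x => z x - a * Dn 2 w x) (fun x => q₁ x - a * Dn 2 p₁ x)
        + L2ip (fun x => z x - a * Dn 2 w x) (fun x => q₂ x - a * Dn 2 p₂ x) := by
    rw [L2ip, L2ip, L2ip, ← intervalIntegral.integral_add iA iB]
    exact ii_congr (fun x hx => by rw [hDp x hx]; ring)
  have e2 : L2ip (fun x => b * Dn 2 z x + 4 * w x)
      (fun x => a * Dn 2 (fun y => q₁ y + q₂ y) x + 4 * (fun y => p₁ y + p₂ y) x)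
      = L2ip (fun x => b * Dn 2 z x + 4 * w x) (fun x => a * Dn 2 q₁ x + 4 * p₁ x)
        + L2ip (fun x => b * Dn 2 z x + 4 * w x) (fun x => a * Dn 2 q₂ x + 4 * p₂ x) := by
    rw [L2ip, L2ip, L2ip, ← intervalIntegral.integral_add iC iD]
    exact ii_congr (fun x hx => by rw [hDq x hx]; ring)
  show lam * _ + _ = (lam * _ + _) + (lam * _ + _)
  rw [e1, e2]
  ring

/-- Robust quasi-optimality of the Galerkin scheme in the balanced norm. -/
theorem quasi_optimality (lam : ℝ) (hlam : 3 ≤ lam) :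
    ∃ C > 0, ∀ ε ∈ Ioc (0:ℝ) 1,
      ∀ u : ℝ → ℝ, ContDiffOn ℝ 4 u (Icc (0:ℝ) 1) → ClampedBC u →
      ∀ Vh : Submodule ℝ ((ℝ → ℝ) × (ℝ → ℝ)),
        (∀ wz ∈ Vh, ContDiffOn ℝ 2 wz.1 (Icc (0:ℝ) 1) ∧ ClampedBC wz.1 ∧
          ContDiffOn ℝ 2 wz.2 (Icc (0:ℝ) 1)) →
      ∀ uh vh : ℝ → ℝ, (uh, vh) ∈ Vh →
        (∀ wz ∈ Vh,
          Bform ε lam (fun x => u x - uh x)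
            (fun x => ε ^ ((3:ℝ)/2) * Dn 2 u x - vh x) wz.1 wz.2 = 0) →
        -- first quasi-optimal estimate
        (∀ us vs : ℝ → ℝ, (us, vs) ∈ Vh →
          bal ε (fun x => u x - uh x) (fun x => ε ^ ((3:ℝ)/2) * Dn 2 u x - vh x)
            ≤ C * bal ε (fun x => u x - us x)
                (fun x => ε ^ ((3:ℝ)/2) * Dn 2 u x - vs x)) ∧
        -- second estimate, for product spaces V_h = V_h^u × V_h^v
        (∀ Vhu Vhv : Submodule ℝ (ℝ → ℝ), Vh = Vhu.prod Vhv →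
          ∀ us ∈ Vhu, ∀ vs ∈ Vhv,
            bal ε (fun x => u x - uh x) (fun x => ε ^ ((3:ℝ)/2) * Dn 2 u x - vh x)
              ≤ C * ((L2nrm (fun x => u x - us x)
                       + ε ^ ((3:ℝ)/2) * L2nrm (Dn 2 (fun x => u x - us x)))
                  + C * ε ^ ((3:ℝ)/2) *
                    (L2nrm (fun x => Dn 2 u x - vs x)
                       + ε^2 * L2nrm (fun x => Dn 4 u x - Dn 2 vs x)))) := by
  refine ⟨2*lam + 25, by linarith, ?_⟩
  intro ε hε u hu hubc Vh hVh uh vh hmemh hGal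
  obtain ⟨hε0, hε1⟩ := hε
  set C := 2*lam + 25 with hC_def
  have hC1 : (1:ℝ) ≤ C := by rw [hC_def]; linarith
  have hC0 : (0:ℝ) < C := by linarith
  set a := ε ^ ((3:ℝ)/2) with ha_def
  have ha : 0 < a := Real.rpow_pos_of_pos hε0 _
  have ha2 : a^2 = ε^3 := by
    rw [ha_def, ← Real.rpow_natCast (ε ^ ((3:ℝ)/2)) 2, ← Real.rpow_mul hε0.le,
      ← Real.rpow_natCast ε 3]
    norm_num
  have hu2 : ContDiffOn ℝ 2 u (Icc (0:ℝ) 1) := hu.of_le (by norm_num)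
  have hDu2 : ContDiffOn ℝ 2 (Dn 2 u) (Icc (0:ℝ) 1) := contDiffOn_Dn hu (by norm_num)
  obtain ⟨huhC, huhBC, hvhC⟩ := hVh _ hmemh
  have hwC : ContDiffOn ℝ 2 (fun x => u x - uh x) (Icc (0:ℝ) 1) := hu2.sub huhC
  have hzC : ContDiffOn ℝ 2 (fun x => a * Dn 2 u x - vh x) (Icc (0:ℝ) 1) :=
    (contDiffOn_const.mul hDu2).sub hvhC
  have hwBC : ClampedBC (fun x => u x - uh x) := clamped_sub hu2 huhC hubc huhBC
  -- the first (quasi-optimality) estimate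
  have Hfirst : ∀ us vs : ℝ → ℝ, (us, vs) ∈ Vh →
      bal ε (fun x => u x - uh x) (fun x => a * Dn 2 u x - vh x)
        ≤ C * bal ε (fun x => u x - us x) (fun x => a * Dn 2 u x - vs x) := by
    intro us vs hmem
    obtain ⟨husC, husBC, hvsC⟩ := hVh _ hmem
    have hpC : ContDiffOn ℝ 2 (fun x => u x - us x) (Icc (0:ℝ) 1) := hu2.sub husC
    have hqC : ContDiffOn ℝ 2 (fun x => a * Dn 2 u x - vs x) (Icc (0:ℝ) 1) :=
      (contDiffOn_const.mul hDu2).sub hvsC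
    have hpBC : ClampedBC (fun x => u x - us x) := clamped_sub hu2 husC hubc husBC
    have hχmem : ((us, vs) - (uh, vh) : (ℝ → ℝ) × (ℝ → ℝ)) ∈ Vh :=
      Submodule.sub_mem _ hmem hmemh
    obtain ⟨hχ1C, hχ1BC, hχ2C⟩ := hVh _ hχmem
    rw [Prod.fst_sub] at hχ1C
    rw [Prod.snd_sub] at hχ2C
    have hzero := hGal _ hχmem
    rw [Prod.fst_sub, Prod.snd_sub] at hzero
    have hcoerc := coercive hε0 hε1 hlam hwC hzC hwBC
    have hsplitB := Bform_split ε lam hwC hzC hpC hqC hχ1C hχ2C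
      (p₂ := us - uh) (q₂ := vs - vh)
      (fun x => by show u x - uh x = (u x - us x) + (us x - uh x); ring)
      (fun x => by show a * Dn 2 u x - vh x = (a * Dn 2 u x - vs x) + (vs x - vh x); ring)
    have hcont := bound_B hε0 hε1 hlam hwC hzC hpC hqC hwBC hpBC
    have hsq : bal ε (fun x => u x - uh x) (fun x => a * Dn 2 u x - vh x) ^ 2
        ≤ (C * bal ε (fun x => u x - us x) (fun x => a * Dn 2 u x - vs x))
          * bal ε (fun x => u x - uh x) (fun x => a * Dn 2 u x - vh x) := by
      calc bal ε (fun x => u x - uh x) (fun x => a * Dn 2 u x - vh x) ^ 2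
          ≤ Bform ε lam (fun x => u x - uh x) (fun x => a * Dn 2 u x - vh x)
            (fun x => u x - uh x) (fun x => a * Dn 2 u x - vh x) := hcoerc
        _ = Bform ε lam (fun x => u x - uh x) (fun x => a * Dn 2 u x - vh x)
            (fun x => u x - us x) (fun x => a * Dn 2 u x - vs x) := by
            rw [hsplitB, hzero, add_zero]
        _ ≤ C * (bal ε (fun x => u x - uh x) (fun x => a * Dn 2 u x - vh x)
            * bal ε (fun x => u x - us x) (fun x => a * Dn 2 u x - vs x)) := hcont
        _ = (C * bal ε (fun x => u x - us x) (fun x => a * Dn 2 u x - vs x))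
            * bal ε (fun x => u x - uh x) (fun x => a * Dn 2 u x - vh x) := by ring
    exact le_of_sq_le' (bal_nonneg _ _ _)
      (mul_nonneg hC0.le (bal_nonneg _ _ _)) hsq
  refine ⟨Hfirst, ?_⟩
  -- second estimate
  intro Vhu Vhv hprod us hus vs hvs
  have hvsmem : ((0 : ℝ → ℝ), vs) ∈ Vh := by
    rw [hprod]; exact Submodule.mem_prod.mpr ⟨Vhu.zero_mem, hvs⟩
  have hvsC : ContDiffOn ℝ 2 vs (Icc (0:ℝ) 1) := (hVh _ hvsmem).2.2
  have hmem1 : ((us, a • vs) : (ℝ → ℝ) × (ℝ → ℝ)) ∈ Vh := by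
    rw [hprod]; exact Submodule.mem_prod.mpr ⟨hus, Vhv.smul_mem a hvs⟩
  have hle := Hfirst us (a • vs) hmem1
  -- abbreviations
  set N1 := L2nrm (fun x => u x - us x) with hN1
  set N2 := L2nrm (Dn 2 (fun x => u x - us x)) with hN2
  set N3 := L2nrm (fun x => Dn 2 u x - vs x) with hN3
  set N4 := L2nrm (fun x => Dn 4 u x - Dn 2 vs x) with hN4
  have nN1 : 0 ≤ N1 := L2nrm_nonneg _
  have nN2 : 0 ≤ N2 := L2nrm_nonneg _
  have nN3 : 0 ≤ N3 := L2nrm_nonneg _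
  have nN4 : 0 ≤ N4 := L2nrm_nonneg _
  -- identify the pieces of bal for the interpolant (us, a • vs)
  have hgC : ContDiffOn ℝ 2 (fun y => Dn 2 u y - vs y) (Icc (0:ℝ) 1) := hDu2.sub hvsC
  have hfeq : (fun x => a * Dn 2 u x - (a • vs) x) = (fun y => a * (Dn 2 u y - vs y)) := by
    funext y
    show a * Dn 2 u y - a * vs y = a * (Dn 2 u y - vs y)
    ring
  have hDq' : ∀ x ∈ Icc (0:ℝ) 1,
      Dn 2 (fun x => a * Dn 2 u x - (a • vs) x) x = a * (Dn 4 u x - Dn 2 vs x) := by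
    intro x hx
    rw [hfeq]
    rw [Dn2_const_mul hgC x hx]
    have hsub := Dn2_combo (c := (1:ℝ)) (f := Dn 2 u) (v := vs) hDu2 hvsC x hx
    have h42 := Dn_comp 2 2 u x hx
    norm_num at h42
    have : Dn 2 (fun y => Dn 2 u y - vs y) x = Dn 2 (Dn 2 u) x - Dn 2 vs x := by
      have heq2 : (fun y => Dn 2 u y - vs y) = Dn 2 u - vs := rfl
      rw [Dn, heq2]
      exact iteratedDerivWithin_sub hx udo (hDu2 x hx) (hvsC x hx)
    rw [this, h42]
  -- bound bal of the interpolation error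
  have hS3 : L2nsq (fun x => a * Dn 2 u x - (a • vs) x)
      = a^2 * L2nsq (fun x => Dn 2 u x - vs x) := by
    rw [L2nsq, L2nsq, ← intervalIntegral.integral_const_mul]
    exact ii_congr (fun x _ => by
      show (a * Dn 2 u x - (a • vs) x)^2 = a^2 * (Dn 2 u x - vs x)^2
      show (a * Dn 2 u x - a * vs x)^2 = a^2 * (Dn 2 u x - vs x)^2
      ring)
  have hS4 : L2nsq (Dn 2 (fun x => a * Dn 2 u x - (a • vs) x))
      = a^2 * L2nsq (fun x => Dn 4 u x - Dn 2 vs x) := by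
    rw [L2nsq, L2nsq, ← intervalIntegral.integral_const_mul]
    exact ii_congr (fun x hx => by rw [hDq' x hx]; ring)
  have hMle : bal ε (fun x => u x - us x) (fun x => a * Dn 2 u x - (a • vs) x)
      ≤ N1 + a * N2 + (a * N3 + ε^2 * (a * N4)) := by
    rw [bal]
    have n1 := L2nsq_nonneg (fun x => u x - us x)
    have n2 : 0 ≤ ε^3 * L2nsq (Dn 2 fun x => u x - us x) :=
      mul_nonneg (pow_nonneg hε0.le 3) (L2nsq_nonneg _)
    have n3 := L2nsq_nonneg (fun x => a * Dn 2 u x - (a • vs) x)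
    have n4 : 0 ≤ ε^4 * L2nsq (Dn 2 fun x => a * Dn 2 u x - (a • vs) x) :=
      mul_nonneg (pow_nonneg hε0.le 4) (L2nsq_nonneg _)
    have step1 := sqrt_add_le (by linarith : (0:ℝ) ≤ L2nsq (fun x => u x - us x)
        + ε^3 * L2nsq (Dn 2 fun x => u x - us x)
        + L2nsq (fun x => a * Dn 2 u x - (a • vs) x)) n4
    have step2 := sqrt_add_le (by linarith : (0:ℝ) ≤ L2nsq (fun x => u x - us x)
        + ε^3 * L2nsq (Dn 2 fun x => u x - us x)) n3
    have step3 := sqrt_add_le n1 n2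
    have t1 : Real.sqrt (L2nsq (fun x => u x - us x)) = N1 := rfl
    have t2 : Real.sqrt (ε^3 * L2nsq (Dn 2 fun x => u x - us x)) = a * N2 := by
      rw [hN2, L2nrm, sqrt_coef ha.le, ha2]
    have t3 : Real.sqrt (L2nsq (fun x => a * Dn 2 u x - (a • vs) x)) = a * N3 := by
      rw [hS3, hN3, L2nrm, sqrt_coef ha.le]
    have t4 : Real.sqrt (ε^4 * L2nsq (Dn 2 fun x => a * Dn 2 u x - (a • vs) x))
        = ε^2 * (a * N4) := by
      rw [hS4, hN4, L2nrm, show ε^4 * (a^2 * L2nsq (fun x => Dn 4 u x - Dn 2 vs x))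
          = (ε^2*a)^2 * L2nsq (fun x => Dn 4 u x - Dn 2 vs x) by ring,
        ← sqrt_coef (by positivity : (0:ℝ) ≤ ε^2*a)]
      ring
    calc Real.sqrt (L2nsq (fun x => u x - us x)
          + ε^3 * L2nsq (Dn 2 fun x => u x - us x)
          + L2nsq (fun x => a * Dn 2 u x - (a • vs) x)
          + ε^4 * L2nsq (Dn 2 fun x => a * Dn 2 u x - (a • vs) x))
        ≤ Real.sqrt (L2nsq (fun x => u x - us x)
          + ε^3 * L2nsq (Dn 2 fun x => u x - us x)
          + L2nsq (fun x => a * Dn 2 u x - (a • vs) x))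
          + Real.sqrt (ε^4 * L2nsq (Dn 2 fun x => a * Dn 2 u x - (a • vs) x)) := step1
      _ ≤ (Real.sqrt (L2nsq (fun x => u x - us x)
          + ε^3 * L2nsq (Dn 2 fun x => u x - us x))
          + Real.sqrt (L2nsq (fun x => a * Dn 2 u x - (a • vs) x)))
          + Real.sqrt (ε^4 * L2nsq (Dn 2 fun x => a * Dn 2 u x - (a • vs) x)) := by
          linarith [step2]
      _ ≤ ((Real.sqrt (L2nsq (fun x => u x - us x))
          + Real.sqrt (ε^3 * L2nsq (Dn 2 fun x => u x - us x)))
          + Real.sqrt (L2nsq (fun x => a * Dn 2 u x - (a • vs) x)))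
          + Real.sqrt (ε^4 * L2nsq (Dn 2 fun x => a * Dn 2 u x - (a • vs) x)) := by
          linarith [step3]
      _ = N1 + a * N2 + (a * N3 + ε^2 * (a * N4)) := by
          rw [t1, t2, t3, t4]; ring
  -- conclude
  have hfinal : C * (N1 + a * N2 + (a * N3 + ε^2 * (a * N4)))
      ≤ C * ((N1 + a * N2) + C * a * (N3 + ε^2 * N4)) := by
    apply mul_le_mul_of_nonneg_left _ hC0.le
    have k1 : (0:ℝ) ≤ (C - 1) * a * N3 :=
      mul_nonneg (mul_nonneg (by linarith) ha.le) nN3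
    have k2 : (0:ℝ) ≤ (C - 1) * a * (ε^2 * N4) :=
      mul_nonneg (mul_nonneg (by linarith) ha.le) (mul_nonneg (sq_nonneg ε) nN4)
    nlinarith [k1, k2]
  calc bal ε (fun x => u x - uh x) (fun x => a * Dn 2 u x - vh x)
      ≤ C * bal ε (fun x => u x - us x) (fun x => a * Dn 2 u x - (a • vs) x) := hle
    _ ≤ C * (N1 + a * N2 + (a * N3 + ε^2 * (a * N4))) :=
        mul_le_mul_of_nonneg_left hMle hC0.le
    _ ≤ C * ((N1 + a * N2) + C * a * (N3 + ε^2 * N4)) := hfinal
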